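/- Let k_A ∈ A_A^− and k_C ∈ A_C^− be odd elements of disjoint regions of a graded (CAR) system with ‖k_A‖ ≤ 1 and ‖k_C‖ ≤ 1, and set K := (1/2)(k_A* k_C − k_A k_C*). Then K is self-adjoint with ‖K‖ ≤ 1, and for every real λ with |λ| ≤ 1 the element ρ := 1 + λK is a density with respect to the tracial state τ on A_AC (i.e. ρ ≥ 0 and τ(ρ) = 1). -/

import Mathlib

open scoped ComplexOrder

/-- The full matrix algebra `M_N(ℂ)`, our model of a finite-dimensional factor. -/
abbrev Mat (N : ℕ) := Matrix (Fin N) (Fin N) ℂ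

variable {N : ℕ}

/-- The tracial state `τ` on `Mat N`. -/
noncomputable def tau (x : Mat N) : ℂ := x.trace / N

/-- Matrix logarithm via the continuous functional calculus. -/
noncomputable def mlog (x : Mat N) : Mat N := cfc Real.log x

/-- Matrix square root via the continuous functional calculus. -/
noncomputable def msqrt (x : Mat N) : Mat N := cfc Real.sqrt x

/-- Matrix inverse square root via the continuous functional calculus. -/
noncomputable def misqrt (x : Mat N) : Mat N := cfc (fun t : ℝ => (Real.sqrt t)⁻¹) x

/-- The entropy `Ŝ(ψ) = -ψ(log ρ_ψ) = -τ(ρ log ρ)` of the state with τ-density `ρ`. -/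
noncomputable def Shat (ρ : Mat N) : ℝ := -(tau (ρ * mlog ρ)).re

/-- The von Neumann entropy `S(ψ|_B) = -Tr_B(D log D) = Ŝ(ψ|_B) + log k` of the
restriction of a state to a subfactor `B ≅ M_k`, expressed through the τ-density `ρ`
of the restriction and the matrix size `k` of the subfactor. -/
noncomputable def Sres (ρ : Mat N) (k : ℕ) : ℝ := Shat ρ + Real.log k

/-- `ρ` is the density with respect to the tracial state `τ` of a state of `Mat N`. -/
def IsTauDensity (ρ : Mat N) : Prop := ρ.PosSemidef ∧ tau ρ = 1

/-- `E` is the τ-preserving conditional expectation onto the unital *-subalgebra `B`: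
it maps into `B`, fixes `B` pointwise, and `Tr(b x) = Tr(b (E x))` for all `b ∈ B`.
These properties determine `E` uniquely. -/
def IsCondExp (B : StarSubalgebra ℂ (Mat N)) (E : Mat N →ₗ[ℂ] Mat N) : Prop :=
  (∀ x, E x ∈ B) ∧ (∀ b ∈ B, E b = b) ∧
    (∀ x : Mat N, ∀ b ∈ B, (b * x).trace = (b * E x).trace)

/-- `B` is a subfactor: its relative center is trivial (so `B` is a full matrix algebra). -/
def IsFactorSub (B : StarSubalgebra ℂ (Mat N)) : Prop :=
  ∀ x ∈ B, (∀ y ∈ B, x * y = y * x) → ∃ c : ℂ, x = c • (1 : Mat N)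

/-- The commuting square condition: `B = AB ⊓ BC` and `E_AB ∘ E_BC = E_BC ∘ E_AB = E_B`. -/
def CommSquare (AB BC B : StarSubalgebra ℂ (Mat N))
    (EAB EBC EB : Mat N →ₗ[ℂ] Mat N) : Prop :=
  IsCondExp AB EAB ∧ IsCondExp BC EBC ∧ IsCondExp B EB ∧
    B = AB ⊓ BC ∧ (∀ x, EAB (EBC x) = EB x) ∧ (∀ x, EBC (EAB x) = EB x)

open Classical in
/-- Relative entropy `H(ρ₁, ρ₂) = τ(ρ₁ (log ρ₁ - log ρ₂))` of two τ-densities, equal to `+∞`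
unless the support of `ρ₁` is dominated by the support of `ρ₂` (for positive semidefinite
matrices the support condition is the inclusion of kernels `ker ρ₂ ⊆ ker ρ₁`). -/
noncomputable def relEnt (ρ₁ ρ₂ : Mat N) : EReal :=
  if ∀ v : Fin N → ℂ, ρ₂.mulVec v = 0 → ρ₁.mulVec v = 0 then
    (((tau (ρ₁ * (mlog ρ₁ - mlog ρ₂))).re : ℝ) : EReal)
  else ⊤

/-- Complete positivity of a linear map on `Mat N`. -/
def IsCP (E : Mat N →ₗ[ℂ] Mat N) : Prop :=
  ∀ (k : ℕ) (x a : Fin k → Mat N),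
    (∑ i, ∑ j, star (a i) * E (star (x i) * x j) * a j).PosSemidef

/-- `p` is a minimal projection of the subalgebra `B`. -/
def IsMinProj (B : StarSubalgebra ℂ (Mat N)) (p : Mat N) : Prop :=
  p ∈ B ∧ p.IsHermitian ∧ p * p = p ∧ p ≠ 0 ∧
    ∀ q ∈ B, q.IsHermitian → q * q = q → q * p = q → q = 0 ∨ q = p

/-- The subfactor `B` of `Mat N` has matrix size `k` (i.e. `B ≅ M_k`) in the sense that its
minimal projections have ambient matrix trace `N / k`; this encodes the assumption that the
ambient matrix trace restricts on `B` to `N/k` times the canonical matrix trace of `B`. -/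
def HasMatSize (B : StarSubalgebra ℂ (Mat N)) (k : ℕ) : Prop :=
  ∀ p, IsMinProj B p → Matrix.trace p = ((N : ℂ) / k)

/-- `Θ` is a grading: an involutive *-automorphism. -/
def IsGrading (Θ : Mat N ≃⋆ₐ[ℂ] Mat N) : Prop := ∀ x, Θ (Θ x) = x

/-- The subalgebra `A` is invariant under the grading. -/
def ThetaInvariant (Θ : Mat N ≃⋆ₐ[ℂ] Mat N) (A : StarSubalgebra ℂ (Mat N)) : Prop :=
  ∀ x ∈ A, Θ x ∈ A

/-- Graded commutation relations between (the subalgebras of) two disjoint regions: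
even elements of one commute with all elements of the other, odd elements anticommute. -/
def GradedComm (Θ : Mat N ≃⋆ₐ[ℂ] Mat N) (A C : StarSubalgebra ℂ (Mat N)) : Prop :=
  ∀ x ∈ A, ∀ y ∈ C,
    ((Θ x = x ∨ Θ y = y) → x * y = y * x) ∧
      (Θ x = -x → Θ y = -y → x * y + y * x = 0)

/-- `ω` is a state (positive normalized linear functional). -/
def IsState (ω : Mat N →ₗ[ℂ] ℂ) : Prop :=
  ω 1 = 1 ∧ ∀ x : Mat N, 0 ≤ ω (star x * x)

/-- Markov property of the state `ω` with respect to a triplet with first algebra `AA` and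
pair algebra `AB`: there is a quasi-conditional expectation (a completely positive map into
`AB` which is a module map over `AA`) fixing `AA` pointwise and preserving `ω`. -/
def IsMarkovState (AA AB : StarSubalgebra ℂ (Mat N)) (ω : Mat N →ₗ[ℂ] ℂ) : Prop :=
  ∃ E : Mat N →ₗ[ℂ] Mat N, IsCP E ∧ (∀ x, E x ∈ AB) ∧
    (∀ c ∈ AA, ∀ x, E (c * x) = c * E x) ∧ (∀ c ∈ AA, E c = c) ∧
    ∀ x, ω (E x) = ω x

/-- Markov property, formulated for the state with τ-density `ρ`. -/
def IsMarkovDensity (AA AB : StarSubalgebra ℂ (Mat N)) (ρ : Mat N) : Prop :=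
  ∃ E : Mat N →ₗ[ℂ] Mat N, IsCP E ∧ (∀ x, E x ∈ AB) ∧
    (∀ c ∈ AA, ∀ x, E (c * x) = c * E x) ∧ (∀ c ∈ AA, E c = c) ∧
    ∀ x, tau (ρ * E x) = tau (ρ * x)

/-- The restriction of `ω` to the subalgebra generated by `AA` and `AC` is separable:
a convex combination of product states for the pair `(AA, AC)`. -/
def SeparableOn (AA AC : StarSubalgebra ℂ (Mat N)) (ω : Mat N →ₗ[ℂ] ℂ) : Prop :=
  ∃ (n : ℕ) (lam : Fin n → ℝ) (ωi : Fin n → (Mat N →ₗ[ℂ] ℂ)),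
    (∀ i, 0 ≤ lam i) ∧ (∑ i, lam i = 1) ∧ (∀ i, IsState (ωi i)) ∧
    (∀ i, ∀ x ∈ AA, ∀ y ∈ AC, ωi i (x * y) = ωi i x * ωi i y) ∧
    ∀ z ∈ (AA ⊔ AC : StarSubalgebra ℂ (Mat N)), ω z = ∑ i, (lam i : ℂ) * ωi i z

/-- The conditional expectation `E` is sufficient for the pair of states with τ-densities
`ρ₁, ρ₂`: some completely positive trace-preserving (recovery) map `T` recovers the densities
from their compressions `E ρ₁`, `E ρ₂` (recall that the τ-density of `ψ ∘ E` is `E ρ_ψ`). -/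
def IsSufficient (E : Mat N →ₗ[ℂ] Mat N) (ρ₁ ρ₂ : Mat N) : Prop :=
  ∃ T : Mat N →ₗ[ℂ] Mat N, IsCP T ∧ (∀ x, (T x).trace = x.trace) ∧
    T (E ρ₁) = ρ₁ ∧ T (E ρ₂) = ρ₂

open scoped Matrix.Norms.L2Operator
open scoped Pointwise

/-- The fermion hopping element `K = (1/2)(k_A^* k_C − k_A k_C^*)`. -/
noncomputable def hopK {N : ℕ} (kA kC : Mat N) : Mat N :=
  (1 / 2 : ℂ) • (star kA * kC - kA * star kC)

/-- for odd elements `k_A ∈ A_A^-`, `k_C ∈ A_C^-` of disjoint regions with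
`‖k_A‖ ≤ 1`, `‖k_C‖ ≤ 1` (ℓ²-operator norm), the hopping element
`K = (1/2)(k_A^* k_C − k_A k_C^*)` is self-adjoint with `‖K‖ ≤ 1`, and `1 + λ K` is a
density with respect to the tracial state for every real `λ` with `|λ| ≤ 1`. -/
theorem stmt16 {N : ℕ} (hN : 0 < N)
    (Θ : Mat N ≃⋆ₐ[ℂ] Mat N) (hΘ : IsGrading Θ)
    (SA SC : StarSubalgebra ℂ (Mat N))
    (hAinv : ThetaInvariant Θ SA) (hCinv : ThetaInvariant Θ SC)
    (hcomm : GradedComm Θ SA SC)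
    (htauprod : ∀ x ∈ SA, ∀ y ∈ SC, tau (x * y) = tau x * tau y)
    (kA kC : Mat N) (hkA : kA ∈ SA) (hkC : kC ∈ SC)
    (hkAodd : Θ kA = -kA) (hkCodd : Θ kC = -kC)
    (hnA : ‖kA‖ ≤ 1) (hnC : ‖kC‖ ≤ 1)
    (lam : ℝ) (hlam : |lam| ≤ 1) :
    star (hopK kA kC) = hopK kA kC ∧ ‖hopK kA kC‖ ≤ 1 ∧
      ((1 : Mat N) + (lam : ℂ) • hopK kA kC).PosSemidef ∧
      tau ((1 : Mat N) + (lam : ℂ) • hopK kA kC) = 1 := by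
  haveI : Nonempty (Fin N) := Fin.pos_iff_nonempty.mp hN
  haveI : Nontrivial (Mat N) := inferInstance
  -- odd/star facts and anticommutation
  have hkAodd' : Θ (star kA) = -(star kA) := by rw [map_star, hkAodd, star_neg]
  have hkCodd' : Θ (star kC) = -(star kC) := by rw [map_star, hkCodd, star_neg]
  have h1 : star kA * kC + kC * star kA = 0 :=
    (hcomm _ (star_mem hkA) _ hkC).2 hkAodd' hkCodd
  have h2 : kA * star kC + star kC * kA = 0 :=
    (hcomm _ hkA _ (star_mem hkC)).2 hkAodd hkCodd'
  have e1 : kC * star kA = -(star kA * kC) := eq_neg_of_add_eq_zero_left (by rwa [add_comm] at h1)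
  have e2 : star kC * kA = -(kA * star kC) := eq_neg_of_add_eq_zero_left (by rwa [add_comm] at h2)
  -- self-adjointness
  have hsa : star (hopK kA kC) = hopK kA kC := by
    have hhalf : star ((1 : ℂ) / 2) = (1 : ℂ) / 2 := by simp
    simp only [hopK, star_smul, star_sub, star_mul, star_star, hhalf, e1, e2]
    rw [neg_sub_neg]
  -- norm bound
  have hnA0 : (0 : ℝ) ≤ ‖kA‖ := norm_nonneg _
  have hnC0 : (0 : ℝ) ≤ ‖kC‖ := norm_nonneg _
  have hmul1 : ‖star kA * kC‖ ≤ 1 := by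
    calc ‖star kA * kC‖ ≤ ‖star kA‖ * ‖kC‖ := norm_mul_le _ _
      _ = ‖kA‖ * ‖kC‖ := by rw [Matrix.star_eq_conjTranspose, Matrix.l2_opNorm_conjTranspose]
      _ ≤ 1 * 1 := by exact mul_le_mul hnA hnC hnC0 zero_le_one
      _ = 1 := one_mul 1
  have hmul2 : ‖kA * star kC‖ ≤ 1 := by
    calc ‖kA * star kC‖ ≤ ‖kA‖ * ‖star kC‖ := norm_mul_le _ _
      _ = ‖kA‖ * ‖kC‖ := by rw [Matrix.star_eq_conjTranspose, Matrix.l2_opNorm_conjTranspose]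
      _ ≤ 1 * 1 := by exact mul_le_mul hnA hnC hnC0 zero_le_one
      _ = 1 := one_mul 1
  have hnorm : ‖hopK kA kC‖ ≤ 1 := by
    have : ‖hopK kA kC‖ = ‖(1 / 2 : ℂ)‖ * ‖star kA * kC - kA * star kC‖ := norm_smul _ _
    rw [this]
    have hhalf : ‖(1 / 2 : ℂ)‖ = 1 / 2 := by norm_num
    have hsub : ‖star kA * kC - kA * star kC‖ ≤ 2 := by
      calc ‖star kA * kC - kA * star kC‖ ≤ ‖star kA * kC‖ + ‖kA * star kC‖ := norm_sub_le _ _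
        _ ≤ 1 + 1 := add_le_add hmul1 hmul2
        _ = 2 := by norm_num
    rw [hhalf]; linarith
  -- Hermitian-ness of 1 + λK
  have hKherm : (hopK kA kC).IsHermitian := by
    rw [Matrix.IsHermitian, ← Matrix.star_eq_conjTranspose, hsa]
  have hM : ((1 : Mat N) + (lam : ℂ) • hopK kA kC).IsHermitian := by
    rw [Matrix.IsHermitian, Matrix.conjTranspose_add, Matrix.conjTranspose_one,
      Matrix.conjTranspose_smul, Complex.star_def, Complex.conj_ofReal, hKherm]
  -- eigenvalues are nonnegative
  have hnormsmul : ‖(lam : ℂ) • hopK kA kC‖ ≤ 1 := by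
    rw [norm_smul, Complex.norm_real, Real.norm_eq_abs]
    calc |lam| * ‖hopK kA kC‖ ≤ 1 * 1 :=
        mul_le_mul hlam hnorm (norm_nonneg _) zero_le_one
      _ = 1 := one_mul 1
  have hpos : ((1 : Mat N) + (lam : ℂ) • hopK kA kC).PosSemidef := by
    apply hM.posSemidef_iff_eigenvalues_nonneg.mpr
    intro i
    have hmem := hM.eigenvalues_mem_spectrum_real i
    have hmem' : hM.eigenvalues i - 1 ∈ spectrum ℝ ((lam : ℂ) • hopK kA kC) := by
      have hset := spectrum.sub_singleton_eq ((1 : Mat N) + (lam : ℂ) • hopK kA kC) (1 : ℝ)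
      have : hM.eigenvalues i - 1 ∈
          spectrum ℝ ((1 : Mat N) + (lam : ℂ) • hopK kA kC) - {(1 : ℝ)} :=
        Set.sub_mem_sub hmem rfl
      rw [hset] at this
      have heq : (1 : Mat N) + (lam : ℂ) • hopK kA kC - algebraMap ℝ (Mat N) 1
          = (lam : ℂ) • hopK kA kC := by
        rw [map_one]; abel
      rwa [heq] at this
    have hb := spectrum.norm_le_norm_of_mem hmem'
    have hb' : |hM.eigenvalues i - 1| ≤ 1 := by
      rw [Real.norm_eq_abs] at hb
      exact hb.trans hnormsmul
    have := abs_le.mp hb'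
    show (0 : ℝ) ≤ hM.eigenvalues i
    linarith [this.1]
  -- trace computation
  have tr0 : ∀ a b : Mat N, a * b + b * a = 0 → (a * b).trace = 0 := by
    intro a b h
    have ht : (a * b).trace + (b * a).trace = 0 := by
      rw [← Matrix.trace_add, h, Matrix.trace_zero]
    rw [Matrix.trace_mul_comm b a] at ht
    have : (2 : ℂ) * (a * b).trace = 0 := by ring_nf; linear_combination ht
    have h2 : (2 : ℂ) ≠ 0 := by norm_num
    exact (mul_eq_zero.mp this).resolve_left h2
  have trK : (hopK kA kC).trace = 0 := by
    simp only [hopK, Matrix.trace_smul, Matrix.trace_sub]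
    rw [tr0 _ _ h1, tr0 _ _ h2]
    simp
  have htau : tau ((1 : Mat N) + (lam : ℂ) • hopK kA kC) = 1 := by
    have hNne : (N : ℂ) ≠ 0 := Nat.cast_ne_zero.mpr hN.ne'
    simp only [tau, Matrix.trace_add, Matrix.trace_smul, trK, Matrix.trace_one]
    simp [Finset.card_univ, hNne]
  exact ⟨hsa, hnorm, hpos, htau⟩
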